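/- arXiv:1005.1987 — 2 statements merged into one kernel-verified Lean document; each statement's English description precedes it below -/
import Mathlib

section
/- If ≺₁ and ≺₀ are wellfounded transitive relations on ℕ, then the exponential relation E(≺₁,≺₀) on finite sequences of pairs with ≺₁-decreasing first components is wellfounded. -/
open Ordinal

/-- The exponential ordering on finite sequences of pairs. -/
def ExpLt {α β : Type*} (r1 : α → α → Prop) (r0 : β → β → Prop) :
    List (α × β) → List (α × β) → Prop :=
  List.Lex (Prod.Lex r1 r0)

/-- The domain: first components are `r1`-decreasing. -/
def ExpDom {α β : Type*} (r1 : α → α → Prop) (l : List (α × β)) : Prop :=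
  List.Chain' (fun p q => r1 q.1 p.1) l

noncomputable def expVal (ρ1 ρ0 : ℕ → Ordinal) (κ : Ordinal) :
    List (ℕ × ℕ) → Ordinal
  | [] => 0
  | p :: l => κ ^ (ρ1 p.1) * (ρ0 p.2 + 1) + expVal ρ1 ρ0 κ l

section Aux

variable {ρ1 ρ0 : ℕ → Ordinal} {κ : Ordinal}

lemma kappa_pos (hκ : ∀ n, ρ0 n + 2 ≤ κ) : 0 < κ := by
  have h2 : (0 : Ordinal) < 2 := by norm_num
  exact h2.trans_le ((le_add_self).trans (hκ 0))

lemma split_two (x c : Ordinal) : x * (c + 2) = x * (c + 1) + x := by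
  rw [show (c + 2 : Ordinal) = (c + 1) + 1 by rw [add_assoc, one_add_one_eq_two],
    mul_add, mul_one]

lemma expVal_lt_opow (hκ : ∀ n, ρ0 n + 2 ≤ κ) {l : List (ℕ × ℕ)} {b : Ordinal}
    (hl : l.Pairwise (fun p q => ρ1 q.1 < ρ1 p.1))
    (hb : ∀ p ∈ l, ρ1 p.1 < b) : expVal ρ1 ρ0 κ l < κ ^ b := by
  induction l generalizing b with
  | nil => exact opow_pos b (kappa_pos hκ)
  | cons p l ih =>
    rcases List.pairwise_cons.1 hl with ⟨hp, hl'⟩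
    have h1 : expVal ρ1 ρ0 κ l < κ ^ (ρ1 p.1) := ih hl' hp
    have h2 : expVal ρ1 ρ0 κ (p :: l) < κ ^ (ρ1 p.1) * (ρ0 p.2 + 2) := by
      show κ ^ (ρ1 p.1) * (ρ0 p.2 + 1) + expVal ρ1 ρ0 κ l < _
      rw [split_two]
      exact add_lt_add_right h1 _
    have h3 : κ ^ (ρ1 p.1) * (ρ0 p.2 + 2) ≤ κ ^ b := by
      calc κ ^ (ρ1 p.1) * (ρ0 p.2 + 2) ≤ κ ^ (ρ1 p.1) * κ :=
            mul_le_mul_right (hκ p.2) _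
        _ = κ ^ (Order.succ (ρ1 p.1)) := (opow_succ κ _).symm
        _ ≤ κ ^ b := opow_le_opow_right (kappa_pos hκ)
            (Order.succ_le_iff.2 (hb p (List.mem_cons_self)))
    exact h2.trans_le h3

lemma expVal_strictMono (hκ : ∀ n, ρ0 n + 2 ≤ κ) {r1 r0 : ℕ → ℕ → Prop}
    (hρ1 : ∀ {a b}, r1 a b → ρ1 a < ρ1 b) (hρ0 : ∀ {a b}, r0 a b → ρ0 a < ρ0 b)
    {s t : List (ℕ × ℕ)}
    (hs : s.Pairwise (fun p q => ρ1 q.1 < ρ1 p.1))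
    (ht : t.Pairwise (fun p q => ρ1 q.1 < ρ1 p.1))
    (h : List.Lex (Prod.Lex r1 r0) s t) :
    expVal ρ1 ρ0 κ s < expVal ρ1 ρ0 κ t := by
  induction h with
  | nil =>
    rename_i p l
    show (0 : Ordinal) < κ ^ (ρ1 p.1) * (ρ0 p.2 + 1) + expVal ρ1 ρ0 κ l
    have hpos : (0 : Ordinal) < κ ^ (ρ1 p.1) * (ρ0 p.2 + 1) :=
      mul_pos (opow_pos _ (kappa_pos hκ))
        (lt_of_lt_of_le zero_lt_one le_add_self)
    exact hpos.trans_le le_self_add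
  | @cons a s t h ih =>
    rcases List.pairwise_cons.1 hs with ⟨_, hs'⟩
    rcases List.pairwise_cons.1 ht with ⟨_, ht'⟩
    exact add_lt_add_right (ih hs' ht') _
  | @rel a s b t hab =>
    cases hab with
    | left c1 c2 hr =>
      rename_i x1 x2
      have h1 : expVal ρ1 ρ0 κ ((x1, c1) :: s) < κ ^ (Order.succ (ρ1 x1)) := by
        refine expVal_lt_opow hκ hs ?_
        intro p hp
        rcases List.mem_cons.1 hp with rfl | hp
        · exact Order.lt_succ _
        · exact ((List.pairwise_cons.1 hs).1 p hp).trans (Order.lt_succ _)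
      refine h1.trans_le ?_
      calc κ ^ (Order.succ (ρ1 x1)) ≤ κ ^ (ρ1 x2) :=
            opow_le_opow_right (kappa_pos hκ) (Order.succ_le_iff.2 (hρ1 hr))
        _ ≤ κ ^ (ρ1 x2) * (ρ0 c2 + 1) := by
            conv_lhs => rw [← mul_one (κ ^ (ρ1 x2))]
            exact mul_le_mul_right le_add_self _
        _ ≤ _ := le_self_add
    | right a1 hr =>
      rename_i a2 b2
      have h1 : expVal ρ1 ρ0 κ s < κ ^ (ρ1 a1) := by
        refine expVal_lt_opow hκ (List.pairwise_cons.1 hs).2 ?_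
        exact fun p hp => (List.pairwise_cons.1 hs).1 p hp
      have h2 : expVal ρ1 ρ0 κ ((a1, a2) :: s) < κ ^ (ρ1 a1) * (ρ0 a2 + 2) := by
        show κ ^ (ρ1 a1) * (ρ0 a2 + 1) + expVal ρ1 ρ0 κ s < _
        rw [split_two]
        exact add_lt_add_right h1 _
      refine h2.trans_le ?_
      have hle : ρ0 a2 + 2 ≤ ρ0 b2 + 1 := by
        have hstep : ρ0 a2 + 1 ≤ ρ0 b2 := by
          rw [add_one_eq_succ]; exact Order.succ_le_iff.2 (hρ0 hr)
        calc ρ0 a2 + 2 = (ρ0 a2 + 1) + 1 := by rw [add_assoc, one_add_one_eq_two]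
          _ ≤ ρ0 b2 + 1 := add_le_add_left hstep 1
      calc κ ^ (ρ1 a1) * (ρ0 a2 + 2) ≤ κ ^ (ρ1 a1) * (ρ0 b2 + 1) :=
            mul_le_mul_right hle _
        _ ≤ _ := le_self_add

end Aux

theorem expLt_wellFounded (r1 r0 : ℕ → ℕ → Prop)
    (h1 : Transitive r1) (h0 : Transitive r0)
    (w1 : WellFounded r1) (w0 : WellFounded r0) :
    WellFounded (fun s t : {l : List (ℕ × ℕ) // ExpDom r1 l} =>
      ExpLt r1 r0 s.1 t.1) := by
  haveI i1 : IsWellFounded ℕ r1 := ⟨w1⟩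
  haveI i0 : IsWellFounded ℕ r0 := ⟨w0⟩
  let ρ1 : ℕ → Ordinal := IsWellFounded.rank r1
  let ρ0 : ℕ → Ordinal := IsWellFounded.rank r0
  let κ : Ordinal := Ordinal.lsub (fun n => ρ0 n + 2)
  have hκ : ∀ n, ρ0 n + 2 ≤ κ := fun n => (Ordinal.lt_lsub _ n).le
  have hmono1 : ∀ {a b}, r1 a b → ρ1 a < ρ1 b :=
    fun h => IsWellFounded.rank_lt_of_rel h
  have hmono0 : ∀ {a b}, r0 a b → ρ0 a < ρ0 b :=
    fun h => IsWellFounded.rank_lt_of_rel h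
  haveI : IsTrans (ℕ × ℕ) (fun p q : ℕ × ℕ => r1 q.1 p.1) :=
    ⟨fun a b c hab hbc => h1 hbc hab⟩
  have pw : ∀ {l : List (ℕ × ℕ)}, ExpDom r1 l →
      l.Pairwise (fun p q => ρ1 q.1 < ρ1 p.1) := by
    intro l hl
    exact (List.isChain_iff_pairwise.1 hl).imp (fun h => hmono1 h)
  have key : ∀ s t : {l : List (ℕ × ℕ) // ExpDom r1 l},
      ExpLt r1 r0 s.1 t.1 → expVal ρ1 ρ0 κ s.1 < expVal ρ1 ρ0 κ t.1 :=
    fun s t h => expVal_strictMono (r1 := r1) (r0 := r0) hκ (fun h => hmono1 h) (fun h => hmono0 h) (pw s.2) (pw t.2) h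
  exact Subrelation.wf (fun {s t} h => key s t h)
    (InvImage.wf (fun s : {l : List (ℕ × ℕ) // ExpDom r1 l} => expVal ρ1 ρ0 κ s.1) wellFounded_lt)
end

section
/- Let ≺₁, ≺₀ be transitive relations on ℕ and ≺_E = E(≺₁,≺₀). If a sequence σ = ⟨(n¹ᵢ,n⁰ᵢ) : i<ℓ⟩ in the domain has all first components in the accessible part of ≺₁ and all second components in the accessible part of ≺₀, then σ lies in the accessible part of the restriction of ≺_E to such sequences. -/
/-- Restriction of the exponential ordering to decreasing sequences all of
whose first (resp. second) components are accessible for `r1` (resp. `r0`). -/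
def ExpLtW (r1 r0 : ℕ → ℕ → Prop) (s t : List (ℕ × ℕ)) : Prop :=
  ExpLt r1 r0 s t ∧ ExpDom r1 s ∧ ExpDom r1 t ∧
    (∀ p ∈ s, Acc r1 p.1 ∧ Acc r0 p.2) ∧
    (∀ p ∈ t, Acc r1 p.1 ∧ Acc r0 p.2)

lemma chainBound {r1 : ℕ → ℕ → Prop} (h1 : Transitive r1) {a : ℕ} {b : ℕ}
    {l : List (ℕ × ℕ)} (h : ExpDom r1 ((a, b) :: l)) : ∀ p ∈ l, r1 p.1 a := by
  haveI : IsTrans (ℕ × ℕ) (fun p q : ℕ × ℕ => r1 q.1 p.1) :=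
    ⟨fun x y z hxy hyz => h1 hyz hxy⟩
  have := (List.isChain_iff_pairwise (l := (a, b) :: l)).1 h
  intro p hp
  exact (List.pairwise_cons.1 this).1 p hp

lemma nil_acc (r1 r0 : ℕ → ℕ → Prop) : Acc (ExpLtW r1 r0) [] := by
  constructor
  intro t ht
  exact absurd ht.1 (by intro h; cases h)

lemma Qlem (r1 r0 : ℕ → ℕ → Prop) (h1 : Transitive r1) (h0 : Transitive r0) :
    ∀ a, Acc r1 a → ∀ b, Acc r0 b → ∀ l, Acc (ExpLtW r1 r0) l →
      (∀ p ∈ l, r1 p.1 a) → Acc (ExpLtW r1 r0) ((a, b) :: l) := by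
  intro a ha
  induction ha with
  | intro a _ IHa =>
    have Hsmall : ∀ l : List (ℕ × ℕ), (∀ p ∈ l, r1 p.1 a) →
        (∀ p ∈ l, Acc r1 p.1 ∧ Acc r0 p.2) → ExpDom r1 l →
        Acc (ExpLtW r1 r0) l := by
      intro l
      induction l with
      | nil => intro _ _ _; exact nil_acc r1 r0
      | cons p l IH =>
        intro hbd hacc hdom
        obtain ⟨a₁, b₁⟩ := p
        have ha₁ : r1 a₁ a := hbd _ (List.mem_cons_self)
        have hbd' : ∀ q ∈ l, r1 q.1 a₁ := chainBound h1 hdom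
        have hl : Acc (ExpLtW r1 r0) l :=
          IH (fun q hq => h1 (hbd' q hq) ha₁)
            (fun q hq => hacc q (List.mem_cons_of_mem _ hq)) hdom.tail
        exact IHa a₁ ha₁ b₁ (hacc _ (List.mem_cons_self)).2 l hl hbd'
    intro b hb
    induction hb with
    | intro b _ IHb =>
      intro l hl
      induction hl with
      | intro l hlacc IHl =>
        intro hbd
        constructor
        intro t ht
        obtain ⟨hlex, hdt, hds, hat, has⟩ := ht
        cases hlex with
        | nil => exact nil_acc r1 r0
        | @cons _ l₁ _ h =>
          have hw : ExpLtW r1 r0 l₁ l :=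
            ⟨h, hdt.tail, hds.tail,
              fun q hq => hat q (List.mem_cons_of_mem _ hq),
              fun q hq => has q (List.mem_cons_of_mem _ hq)⟩
          exact IHl l₁ hw (chainBound h1 hdt)
        | @rel p₁ l₁ _ _ h =>
          obtain ⟨a₁, b₁⟩ := p₁
          cases h with
          | left _ _ h' =>
            have hbd₁ : ∀ q ∈ l₁, r1 q.1 a₁ := chainBound h1 hdt
            have hl₁ : Acc (ExpLtW r1 r0) l₁ :=
              Hsmall l₁ (fun q hq => h1 (hbd₁ q hq) h')
                (fun q hq => hat q (List.mem_cons_of_mem _ hq)) hdt.tail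
            exact IHa a₁ h' b₁ (hat _ (List.mem_cons_self)).2 l₁ hl₁ hbd₁
          | right _ h' =>
            have hbd₁ : ∀ q ∈ l₁, r1 q.1 a := chainBound h1 hdt
            have hl₁ : Acc (ExpLtW r1 r0) l₁ :=
              Hsmall l₁ hbd₁ (fun q hq => hat q (List.mem_cons_of_mem _ hq)) hdt.tail
            exact IHb b₁ h' l₁ hl₁ hbd₁

theorem expLtW_accessible (r1 r0 : ℕ → ℕ → Prop)
    (h1 : Transitive r1) (h0 : Transitive r0)
    (σ : List (ℕ × ℕ)) (hdom : ExpDom r1 σ)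
    (hacc : ∀ p ∈ σ, Acc r1 p.1 ∧ Acc r0 p.2) :
    Acc (ExpLtW r1 r0) σ := by
  induction σ with
  | nil => exact nil_acc r1 r0
  | cons p l IH =>
    obtain ⟨a, b⟩ := p
    exact Qlem r1 r0 h1 h0 a (hacc _ (List.mem_cons_self)).1 b
      (hacc _ (List.mem_cons_self)).2 l
      (IH hdom.tail (fun q hq => hacc q (List.mem_cons_of_mem _ hq)))
      (chainBound h1 hdom)
end
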